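/- For every unitary matrix U = (u_{αβ}) ∈ M_3(ℂ), define V ∈ M_3(ℂ) by V = [[conj(u₃₃), −conj(u₃₂), conj(u₃₁)], [−conj(u₂₃), conj(u₂₂), −conj(u₂₁)], [conj(u₁₃), −conj(u₁₂), conj(u₁₁)]]. Then V is unitary and for every X ∈ M_3(ℂ) one has Φ(U X U†) = V Φ(X) V†; i.e., in the case j = 1 the Landau–Streater channel is globally unitarily (U(3)) covariant. -/

import Mathlib

open Matrix Complex

noncomputable section

/-- Spin-1 matrix `Jₓ = (1/√2)·[[0,1,0],[1,0,1],[0,1,0]]`. -/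
def J1x : Matrix (Fin 3) (Fin 3) ℂ :=
  ((Real.sqrt 2 : ℂ))⁻¹ • !![0, 1, 0; 1, 0, 1; 0, 1, 0]

/-- Spin-1 matrix `J_y = (1/√2)·[[0,-i,0],[i,0,-i],[0,i,0]]`. -/
def J1y : Matrix (Fin 3) (Fin 3) ℂ :=
  ((Real.sqrt 2 : ℂ))⁻¹ • !![0, -Complex.I, 0; Complex.I, 0, -Complex.I; 0, Complex.I, 0]

/-- Spin-1 matrix `J_z = diag(1,0,-1)`. -/
def J1z : Matrix (Fin 3) (Fin 3) ℂ := !![1, 0, 0; 0, 0, 0; 0, 0, -1]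

/-- The spin-1 (j = 1) Landau–Streater map `Φ(X) = (JₓXJₓ + J_yXJ_y + J_zXJ_z)/2`. -/
def LS1 (X : Matrix (Fin 3) (Fin 3) ℂ) : Matrix (Fin 3) (Fin 3) ℂ :=
  (1/2 : ℂ) • (J1x * X * J1x + J1y * X * J1y + J1z * X * J1z)

end

def KK : Matrix (Fin 3) (Fin 3) ℂ := !![0,0,1; 0,-1,0; 1,0,0]

lemma sqrt2_inv_sq : ((Real.sqrt 2 : ℂ))⁻¹ * ((Real.sqrt 2 : ℂ))⁻¹ = 1/2 := by
  rw [← mul_inv]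
  norm_cast
  rw [Real.mul_self_sqrt (by norm_num)]
  norm_num

lemma smul_conj (c : ℂ) (A X : Matrix (Fin 3) (Fin 3) ℂ) :
    (c • A) * X * (c • A) = (c * c) • (A * X * A) := by
  rw [smul_mul_assoc, mul_smul_comm, smul_mul_assoc, smul_smul]

set_option maxHeartbeats 2000000 in
lemma ls_eq (X : Matrix (Fin 3) (Fin 3) ℂ) :
    LS1 X = (1/2 : ℂ) • ((Matrix.trace X) • (1 : Matrix (Fin 3) (Fin 3) ℂ) - KK * Xᵀ * KK) := by
  unfold LS1 J1x J1y J1z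
  rw [smul_conj, smul_conj, sqrt2_inv_sq]
  ext i j
  fin_cases i <;> fin_cases j <;>
    · simp [Matrix.mul_apply, Matrix.vecMul, dotProduct, Fin.sum_univ_succ,
        Matrix.trace, Matrix.diag, Matrix.one_apply, Matrix.transpose_apply, Complex.I_mul_I, KK]
      ring_nf
      simp only [Complex.I_sq]
      ring

lemma KK_herm : KKᴴ = KK := by
  ext i j; fin_cases i <;> fin_cases j <;> simp [KK, Matrix.conjTranspose_apply, Matrix.vecHead, Matrix.vecTail]

lemma KK_sq : KK * KK = 1 := by
  ext i j; fin_cases i <;> fin_cases j <;>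
    simp [KK, Matrix.mul_apply, Fin.sum_univ_succ, Matrix.one_apply]

lemma KK_conj_mul (A B : Matrix (Fin 3) (Fin 3) ℂ) :
    (KK * A * KK) * (KK * B * KK) = KK * (A * B) * KK := by
  have h : KK * (KK * (B * KK)) = B * KK := by
    rw [← Matrix.mul_assoc, KK_sq, Matrix.one_mul]
  simp only [Matrix.mul_assoc]
  rw [h]


/-- global unitary (`U(3)`) covariance of the j = 1 Landau–Streater channel:
for every unitary `U = (u_{αβ})`, the matrix
`V = [[conj u₃₃, -conj u₃₂, conj u₃₁], [-conj u₂₃, conj u₂₂, -conj u₂₁],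
[conj u₁₃, -conj u₁₂, conj u₁₁]]` is unitary and `Φ(U X U†) = V Φ(X) V†` for all `X`. -/
theorem landau_streater_u3_covariance (U : Matrix (Fin 3) (Fin 3) ℂ)
    (hU : U ∈ Matrix.unitaryGroup (Fin 3) ℂ)
    (V : Matrix (Fin 3) (Fin 3) ℂ)
    (hV : V = !![star (U 2 2), -star (U 2 1), star (U 2 0);
                 -star (U 1 2), star (U 1 1), -star (U 1 0);
                 star (U 0 2), -star (U 0 1), star (U 0 0)]) :
    V ∈ Matrix.unitaryGroup (Fin 3) ℂ ∧
      ∀ X : Matrix (Fin 3) (Fin 3) ℂ, LS1 (U * X * Uᴴ) = V * LS1 X * Vᴴ := by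
  set W : Matrix (Fin 3) (Fin 3) ℂ := Uᴴᵀ with hW
  have hVKWK : V = KK * W * KK := by
    subst hV
    ext i j
    fin_cases i <;> fin_cases j <;>
      simp [KK, hW, Matrix.mul_apply, Matrix.vecMul, dotProduct, Fin.sum_univ_succ,
        Matrix.transpose_apply, Matrix.conjTranspose_apply]
  have hWH : Wᴴ = Uᵀ := by
    rw [hW]; ext i j; simp [Matrix.conjTranspose_apply]
  have hUU : U * Uᴴ = 1 := by
    have := (Matrix.mem_unitaryGroup_iff).mp hU
    simpa [Matrix.star_eq_conjTranspose] using this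
  have hUU' : Uᴴ * U = 1 := by
    have := (Matrix.mem_unitaryGroup_iff').mp hU
    simpa [Matrix.star_eq_conjTranspose] using this
  have hWW : W * Wᴴ = 1 := by
    rw [hWH, hW, ← Matrix.transpose_mul, hUU, Matrix.transpose_one]
  have hVH : Vᴴ = KK * Wᴴ * KK := by
    rw [hVKWK]
    simp only [Matrix.conjTranspose_mul, KK_herm, Matrix.mul_assoc]
  have hVV : V * Vᴴ = 1 := by
    rw [hVH, hVKWK, KK_conj_mul, hWW, Matrix.mul_one, KK_sq]
  refine ⟨Matrix.mem_unitaryGroup_iff.mpr (by simpa [Matrix.star_eq_conjTranspose] using hVV), fun X => ?_⟩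
  have htr : Matrix.trace (U * X * Uᴴ) = Matrix.trace X := by
    rw [Matrix.trace_mul_cycle, hUU', Matrix.one_mul]
  have htrans : (U * X * Uᴴ)ᵀ = W * Xᵀ * Wᴴ := by
    rw [Matrix.transpose_mul, Matrix.transpose_mul, hWH, hW, Matrix.mul_assoc]
  rw [ls_eq, ls_eq, htr, htrans]
  rw [mul_smul_comm, smul_mul_assoc]
  congr 1
  rw [Matrix.mul_sub, Matrix.sub_mul]
  congr 1
  · rw [mul_smul_comm, Matrix.mul_one, smul_mul_assoc, hVV]
  · rw [hVH, hVKWK, KK_conj_mul, KK_conj_mul]
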